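/- arXiv:1904.06013 — 4 statements merged into one kernel-verified Lean document; each statement's English description precedes it below -/
import Mathlib

section
/- Let C = {(x₁, x₂) ∈ ℝ² : x₁ ≥ 0, x₂ ≥ 0}, f₁(x, y) = x₂y₁ − x₁y₂, f₂(x, y) = x₁y₂ − x₂y₁, α₁ = α₂ = 1/2, and x¹ = (1, 1). Let {δ_k}, {θ_k}, {ρ_k} ⊂ (0, 1) be arbitrary, and let sequences {x^k}, {y^k}, {z^k} in ℝ² satisfy: x^1 = x¹; z^k ∈ C with (1/2) f₁(z^k, y) + (1/2) f₂(z^k, y) + (1/ρ_k)⟨y − z^k, z^k − x^k⟩ ≥ 0 for all y ∈ C; y^k = θ_k P_C(x^k) + (1 − θ_k) z^k; and x^{k+1} = δ_k x¹ + (1 − δ_k) y^k (the scheme of Statement 2.2 with the contraction F ≡ x¹, A the identity operator, and γ = 1). Then x^k = z^k = y^k = (1, 1) for every k ≥ 1, so {x^k} converges to (1, 1), which does not belong to Ω = Sol(C, f₁) ∩ Sol(C, f₂) = {(0, 0)}. -/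
open Filter Topology RealInnerProductSpace

/-- The plane `ℝ²` as a Euclidean space. -/
abbrev E2 : Type := EuclideanSpace ℝ (Fin 2)

/-- The nonnegative quadrant `C = {(x₁,x₂) ∈ ℝ² : x₁ ≥ 0, x₂ ≥ 0}`. -/
def Quad : Set E2 := {p | 0 ≤ p 0 ∧ 0 ≤ p 1}

/-- `f₁(x,y) = x₂y₁ − x₁y₂`. -/
def f1 (x y : E2) : ℝ := x 1 * y 0 - x 0 * y 1

/-- `f₂(x,y) = x₁y₂ − x₂y₁`. -/
def f2 (x y : E2) : ℝ := x 0 * y 1 - x 1 * y 0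

/-- The point `x¹ = (1,1) ∈ ℝ²`. -/
def onePt : E2 := !₂[1, 1]

/-- The origin `(0,0) ∈ ℝ²`. -/
def zeroPt : E2 := !₂[0, 0]

/-- Solution set of the equilibrium problem `EP(C, f)`. -/
def Sol (C : Set E2) (f : E2 → E2 → ℝ) : Set E2 :=
  {x ∈ C | ∀ y ∈ C, 0 ≤ f x y}

/-- the scheme of Statement 2.2 with `F ≡ x¹ = (1,1)`, `A = I`,
`γ = 1` applied to the combination `(1/2)f₁ + (1/2)f₂` stays at `(1,1)`
forever, hence converges to `(1,1) ∉ Ω = Sol(C,f₁) ∩ Sol(C,f₂) = {(0,0)}`.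
Here `PC` is the metric projection onto `C`, characterized by its variational
inequality. -/
theorem statement_2_2_counterexample
    (PC : E2 → E2)
    (hPC : ∀ p : E2, PC p ∈ Quad ∧ ∀ w ∈ Quad, ⟪w - PC p, p - PC p⟫ ≤ 0)
    (δ θ ρ : ℕ → ℝ)
    (hδ : ∀ k, δ k ∈ Set.Ioo (0 : ℝ) 1)
    (hθ : ∀ k, θ k ∈ Set.Ioo (0 : ℝ) 1)
    (hρ : ∀ k, ρ k ∈ Set.Ioo (0 : ℝ) 1)
    (x y z : ℕ → E2)
    (hx1 : x 1 = onePt)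
    (hz : ∀ k ≥ 1, z k ∈ Quad ∧ ∀ w ∈ Quad,
      0 ≤ (1 / 2) * f1 (z k) w + (1 / 2) * f2 (z k) w +
        (1 / ρ k) * ⟪w - z k, z k - x k⟫)
    (hy : ∀ k ≥ 1, y k = θ k • PC (x k) + (1 - θ k) • z k)
    (hxk : ∀ k ≥ 1, x (k + 1) = (δ k • onePt + (1 - δ k) • y k : E2)) :
    (∀ k ≥ 1, x k = onePt ∧ z k = onePt ∧ y k = onePt) ∧
    Filter.Tendsto x Filter.atTop (𝓝 onePt) ∧
    Sol Quad f1 ∩ Sol Quad f2 = {zeroPt} ∧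
    onePt ∉ Sol Quad f1 ∩ Sol Quad f2 := by
  have honeQ : onePt ∈ Quad := by
    constructor <;> simp [onePt, Quad]
  have hzeroQ : zeroPt ∈ Quad := by
    constructor <;> simp [zeroPt, Quad]
  -- main induction
  have main : ∀ k ≥ 1, x k = onePt ∧ z k = onePt ∧ y k = onePt := by
    have step : ∀ k ≥ 1, x k = onePt → z k = onePt ∧ y k = onePt ∧ x (k+1) = onePt := by
      intro k hk hxk1
      have hρk : 0 < ρ k := (hρ k).1
      have hzk := (hz k hk).2 onePt honeQ
      have hcomb : (1 / 2) * f1 (z k) onePt + (1 / 2) * f2 (z k) onePt = 0 := by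
        simp [f1, f2]; ring
      rw [hxk1] at hzk
      have hinv : 0 < 1 / ρ k := by positivity
      have h0 : 0 ≤ ⟪onePt - z k, z k - onePt⟫ := by
        nlinarith [hzk, hcomb]
      have hzeq : z k = onePt := by
        have : ⟪onePt - z k, onePt - z k⟫ ≤ 0 := by
          have : ⟪onePt - z k, z k - onePt⟫ = -⟪onePt - z k, onePt - z k⟫ := by
            rw [show z k - onePt = -(onePt - z k) by abel, inner_neg_right]
          linarith [h0, this.symm ▸ h0]
        have := (real_inner_self_nonpos).mp this
        have := sub_eq_zero.mp this
        exact this.symm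
      have hPCone : PC onePt = onePt := by
        have h := (hPC onePt).2 onePt honeQ
        have : ⟪onePt - PC onePt, onePt - PC onePt⟫ ≤ 0 := h
        have := (real_inner_self_nonpos).mp this
        exact (sub_eq_zero.mp this).symm
      have hyeq : y k = onePt := by
        rw [hy k hk, hxk1, hPCone, hzeq]
        rw [← add_smul]
        simp
      refine ⟨hzeq, hyeq, ?_⟩
      rw [hxk k hk, hyeq, ← add_smul]
      simp
    intro k hk
    induction k with
    | zero => omega
    | succ n ih =>
      rcases Nat.lt_or_ge 1 (n+1) with h | h
      · have hn : n ≥ 1 := by omega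
        obtain ⟨hxn, _, _⟩ := ih hn
        obtain ⟨hz', hy', hx'⟩ := step n hn hxn
        exact ⟨hx', (step (n+1) (by omega) hx').1, (step (n+1) (by omega) hx').2.1⟩
      · have : n + 1 = 1 := by omega
        rw [this]
        exact ⟨hx1, (step 1 le_rfl hx1).1, (step 1 le_rfl hx1).2.1⟩
  have hsol : Sol Quad f1 ∩ Sol Quad f2 = {zeroPt} := by
    ext p
    constructor
    · rintro ⟨⟨⟨hp0, hp1⟩, h1⟩, ⟨_, h2⟩⟩
      have w1 : (!₂[0,1] : E2) ∈ Quad := by constructor <;> simp [Quad]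
      have w2 : (!₂[1,0] : E2) ∈ Quad := by constructor <;> simp [Quad]
      have e1 := h1 !₂[0,1] w1
      have e2 := h2 !₂[1,0] w2
      simp [f1, f2] at e1 e2
      have hp0' : p 0 = 0 := le_antisymm e1 hp0
      have hp1' : p 1 = 0 := le_antisymm e2 hp1
      have : p = zeroPt := by
        ext i
        fin_cases i <;> simp [zeroPt, hp0', hp1']
      exact this
    · rintro rfl
      refine ⟨⟨hzeroQ, ?_⟩, ⟨hzeroQ, ?_⟩⟩ <;> intro w hw <;> simp [f1, f2, zeroPt]
  refine ⟨main, ?_, hsol, ?_⟩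
  · have hev : x =ᶠ[atTop] fun _ => onePt := by
      filter_upwards [eventually_ge_atTop 1] with k hk
      exact (main k hk).1
    exact Tendsto.congr' hev.symm tendsto_const_nhds
  · rw [hsol]
    intro h
    have : onePt = zeroPt := h
    have := congrArg (fun v : E2 => v 0) this
    simp [onePt, zeroPt] at this
end

section
/- Let C = {(x₁, x₂) ∈ ℝ² : x₁ ≥ 0, x₂ ≥ 0}, f₁(x, y) = x₂y₁ − x₁y₂, f₂(x, y) = x₁y₂ − x₂y₁, α₁ = α₂ = 1/2, and u = x¹ = (1, 1). Let {λ_k}, {μ_k}, {δ_k} ⊂ (0, 1) with λ_k + μ_k + δ_k = 1, and {ρ_k} ⊂ (0, 1). Let sequences {x^k}, {y^k} satisfy: x^1 = x¹; y^k ∈ C with (1/2) f₁(y^k, y) + (1/2) f₂(y^k, y) + (1/ρ_k)⟨y − y^k, y^k − x^k⟩ ≥ 0 for all y ∈ C; and x^{k+1} = λ_k u + μ_k x^k + δ_k y^k (the scheme of Statement 2.3). Then x^k = y^k = (1, 1) for every k ≥ 1, so {x^k} converges to (1, 1), which does not belong to Ω = Sol(C, f₁) ∩ Sol(C, f₂)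 = {(0, 0)}. -/
open Filter Topology RealInnerProductSpace

/-- the scheme of Statement 2.3 with `u = x¹ = (1,1)` applied to
the combination `(1/2)f₁ + (1/2)f₂` stays at `(1,1)` forever, hence converges
to `(1,1) ∉ Ω = Sol(C,f₁) ∩ Sol(C,f₂) = {(0,0)}`. -/
theorem statement_2_3_counterexample
    (lam mu delta ρ : ℕ → ℝ)
    (hlam : ∀ k, lam k ∈ Set.Ioo (0 : ℝ) 1)
    (hmu : ∀ k, mu k ∈ Set.Ioo (0 : ℝ) 1)
    (hdelta : ∀ k, delta k ∈ Set.Ioo (0 : ℝ) 1)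
    (hsum : ∀ k, lam k + mu k + delta k = 1)
    (hρ : ∀ k, ρ k ∈ Set.Ioo (0 : ℝ) 1)
    (x y : ℕ → E2)
    (hx1 : x 1 = onePt)
    (hy : ∀ k ≥ 1, y k ∈ Quad ∧ ∀ w ∈ Quad,
      0 ≤ (1 / 2) * f1 (y k) w + (1 / 2) * f2 (y k) w +
        (1 / ρ k) * ⟪w - y k, y k - x k⟫)
    (hxk : ∀ k ≥ 1, x (k + 1) = (lam k • onePt + mu k • x k + delta k • y k : E2)) :
    (∀ k ≥ 1, x k = onePt ∧ y k = onePt) ∧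
    Filter.Tendsto x Filter.atTop (𝓝 onePt) ∧
    Sol Quad f1 ∩ Sol Quad f2 = {zeroPt} ∧
    onePt ∉ Sol Quad f1 ∩ Sol Quad f2 := by
  have honeQuad : onePt ∈ Quad := by
    constructor <;> norm_num [onePt]
  -- if x k ∈ Quad then y k = x k
  have key : ∀ k ≥ 1, x k ∈ Quad → y k = x k := by
    intro k hk hxQ
    obtain ⟨hyQ, hineq⟩ := hy k hk
    have h := hineq (x k) hxQ
    have hf : (1/2) * f1 (y k) (x k) + (1/2) * f2 (y k) (x k) = 0 := by
      simp only [f1, f2]; ring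
    have hρpos : 0 < 1 / ρ k := by
      have := (hρ k).1; positivity
    have hin : (0:ℝ) ≤ ⟪x k - y k, y k - x k⟫ := by
      by_contra hneg
      push_neg at hneg
      nlinarith [h, hf]
    have hrw : ⟪x k - y k, y k - x k⟫ = -‖x k - y k‖^2 := by
      rw [show y k - x k = -(x k - y k) by abel, inner_neg_right,
        real_inner_self_eq_norm_sq]
    have hnorm : ‖x k - y k‖^2 ≤ 0 := by linarith [hrw ▸ hin]
    have : x k - y k = 0 := by
      have : ‖x k - y k‖ = 0 := by nlinarith [norm_nonneg (x k - y k)]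
      simpa using this
    have := sub_eq_zero.mp this
    exact this.symm
  have hall : ∀ k, 1 ≤ k → x k = onePt ∧ y k = onePt := by
    intro k
    induction k with
    | zero => omega
    | succ n ih =>
      intro _
      rcases Nat.eq_or_lt_of_le (Nat.one_le_iff_ne_zero.mpr (Nat.succ_ne_zero n)) with h1 | h1
      · have hn0 : n = 0 := by omega
        subst hn0
        have hx : x (0+1) = onePt := hx1
        refine ⟨hx, ?_⟩
        have := key (0+1) (by omega) (hx ▸ honeQuad)
        rw [this, hx]
      · have hn : 1 ≤ n := by omega
        obtain ⟨hxn, hyn⟩ := ih hn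
        have hx : x (n+1) = onePt := by
          rw [hxk n hn, hxn, hyn, ← add_smul, ← add_smul, hsum n, one_smul]
        refine ⟨hx, ?_⟩
        have := key (n+1) (by omega) (hx ▸ honeQuad)
        rw [this, hx]
  refine ⟨hall, ?_, ?_⟩
  · apply Tendsto.congr' _ (tendsto_const_nhds (x := onePt))
    filter_upwards [Filter.eventually_ge_atTop 1] with k hk
    exact ((hall k hk).1).symm
  · have hSol : Sol Quad f1 ∩ Sol Quad f2 = {zeroPt} := by
      ext p
      constructor
      · rintro ⟨⟨hpC, h1⟩, ⟨-, h2⟩⟩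
        have he0 : (!₂[1, 0] : E2) ∈ Quad := by constructor <;> norm_num
        have he1 : (!₂[0, 1] : E2) ∈ Quad := by constructor <;> norm_num
        have h1a := h1 !₂[1, 0] he0
        have h2a := h2 !₂[1, 0] he0
        have h1b := h1 !₂[0, 1] he1
        have h2b := h2 !₂[0, 1] he1
        simp only [f1, f2, PiLp.toLp_apply, Matrix.cons_val_zero, Matrix.cons_val_one, Matrix.head_cons] at h1a h2a h1b h2b
        have hp1 : p 1 = 0 := by linarith
        have hp0 : p 0 = 0 := by linarith
        have : p = zeroPt := by
          ext i
          fin_cases i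
          · simpa [zeroPt] using hp0
          · simpa [zeroPt] using hp1
        simpa using this
      · intro hp
        simp only [Set.mem_singleton_iff] at hp
        subst hp
        constructor <;>
          exact ⟨⟨by simp [zeroPt], by simp [zeroPt]⟩, fun w hw => by simp [f1, f2, zeroPt]⟩
    refine ⟨hSol, ?_⟩
    rw [hSol]
    intro h
    simp only [Set.mem_singleton_iff] at h
    have := congrArg (fun v : E2 => v 0) h
    norm_num [onePt, zeroPt] at this
end

section
/- Let C = {(x₁, x₂) ∈ ℝ² : x₁ ≥ 0, x₂ ≥ 0}, f₁(x, y) = x₂y₁ − x₁y₂, f₂(x, y) = x₁y₂ − x₂y₁, α₁ = α₂ = 1/2, and let F : ℝ² → ℝ² be the constant (hence contractive) map F(x) = x¹ = (1, 1). Let {λ_k}, {μ_k}, {δ_k} ⊂ (0, 1) with λ_k + μ_k + δ_k = 1, and {ρ_k} ⊂ (0, 1). Let sequences {x^k}, {y^k} satisfy: x^1 = x¹; y^k ∈ C with (1/2) f₁(y^k, y) + (1/2) f₂(y^k, y) + (1/ρ_k)⟨y − y^k, y^k − x^k⟩ ≥ 0 for all y ∈ C; and x^{k+1} = λ_k F(x^k)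 + μ_k x^k + δ_k y^k (the scheme of Statement 2.4). Then x^k = y^k = (1, 1) for every k ≥ 1, so {x^k} converges to (1, 1), which does not belong to Ω = Sol(C, f₁) ∩ Sol(C, f₂) = {(0, 0)}. -/
open Filter Topology RealInnerProductSpace

/-- the scheme of Statement 2.4 with the constant (hence
contractive) map `F ≡ (1,1)` applied to the combination `(1/2)f₁ + (1/2)f₂`
stays at `(1,1)` forever, hence converges to
`(1,1) ∉ Ω = Sol(C,f₁) ∩ Sol(C,f₂) = {(0,0)}`. -/
theorem statement_2_4_counterexample
    (F : E2 → E2) (hF : ∀ p, F p = (!₂[1, 1] : E2))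
    (lam mu delta ρ : ℕ → ℝ)
    (hlam : ∀ k, lam k ∈ Set.Ioo (0 : ℝ) 1)
    (hmu : ∀ k, mu k ∈ Set.Ioo (0 : ℝ) 1)
    (hdelta : ∀ k, delta k ∈ Set.Ioo (0 : ℝ) 1)
    (hsum : ∀ k, lam k + mu k + delta k = 1)
    (hρ : ∀ k, ρ k ∈ Set.Ioo (0 : ℝ) 1)
    (x y : ℕ → E2)
    (hx1 : x 1 = !₂[1, 1])
    (hy : ∀ k ≥ 1, y k ∈ Quad ∧ ∀ w ∈ Quad,
      0 ≤ (1 / 2) * f1 (y k) w + (1 / 2) * f2 (y k) w +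
        (1 / ρ k) * ⟪w - y k, y k - x k⟫)
    (hxk : ∀ k ≥ 1, x (k + 1) = lam k • F (x k) + mu k • x k + delta k • y k) :
    (∀ k ≥ 1, x k = (!₂[1, 1] : E2) ∧ y k = (!₂[1, 1] : E2)) ∧
    Filter.Tendsto x Filter.atTop (𝓝 (!₂[1, 1] : E2)) ∧
    Sol Quad f1 ∩ Sol Quad f2 = {(!₂[0, 0] : E2)} ∧
    (!₂[1, 1] : E2) ∉ Sol Quad f1 ∩ Sol Quad f2 := by
  set v : E2 := !₂[1, 1] with hv
  have hvQ : (!₂[1, 1] : E2) ∈ Quad := by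
    constructor <;> norm_num [Quad]
  -- If x k = (1,1), then y k = (1,1).
  have hyx : ∀ k ≥ 1, x k = (!₂[1, 1] : E2) → y k = (!₂[1, 1] : E2) := by
    intro k hk hxk'
    obtain ⟨hyQ, hineq⟩ := hy k hk
    have h := hineq (!₂[1, 1] : E2) hvQ
    have hcancel : (1 / 2) * f1 (y k) (!₂[1, 1] : E2) +
        (1 / 2) * f2 (y k) (!₂[1, 1] : E2) = 0 := by
      simp [f1, f2]; ring
    rw [hxk'] at h
    have h2 : 0 ≤ (1 / ρ k) * ⟪v - y k, y k - v⟫ := by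
      linarith
    have hinner : ⟪v - y k, y k - v⟫
        = -‖v - y k‖ ^ 2 := by
      rw [show y k - v = -(v - y k) by abel,
        inner_neg_right, real_inner_self_eq_norm_sq]
    have hρpos : 0 < 1 / ρ k := by
      have := (hρ k).1; positivity
    rw [hinner] at h2
    have hle : ‖v - y k‖ ^ 2 ≤ 0 := by
      nlinarith
    have : v - y k = 0 := by
      have := sq_nonneg ‖v - y k‖
      have hnorm : ‖v - y k‖ = 0 := by nlinarith
      exact norm_eq_zero.mp hnorm
    have := sub_eq_zero.mp this
    exact this.symm
  have key : ∀ k, 1 ≤ k → x k = (!₂[1, 1] : E2) := by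
    intro k
    induction k with
    | zero => omega
    | succ n ih =>
      intro _
      rcases Nat.lt_or_ge n 1 with h | h
      · interval_cases n
        exact hx1
      · have hxn := ih h
        have hyn := hyx n h hxn
        rw [hxk n h, hxn, hyn, hF]
        rw [← add_smul, ← add_smul, hsum n, one_smul]
  have keyy : ∀ k ≥ 1, x k = (!₂[1, 1] : E2) ∧ y k = (!₂[1, 1] : E2) :=
    fun k hk => ⟨key k hk, hyx k hk (key k hk)⟩
  have hSol : Sol Quad f1 ∩ Sol Quad f2 = {(!₂[0, 0] : E2)} := by
    ext z
    simp only [Set.mem_inter_iff, Set.mem_singleton_iff, Sol, Set.mem_setOf_eq]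
    constructor
    · rintro ⟨⟨⟨hz0, hz1⟩, h1⟩, ⟨_, h2⟩⟩
      have e1 : ((!₂[0, 1] : E2)) ∈ Quad := by constructor <;> norm_num [Quad]
      have e2 : ((!₂[1, 0] : E2)) ∈ Quad := by constructor <;> norm_num [Quad]
      have c1 := h1 (!₂[0, 1] : E2) e1
      have c2 := h2 (!₂[1, 0] : E2) e2
      simp [f1, f2] at c1 c2
      have hz0' : z 0 = 0 := le_antisymm c1 hz0
      have hz1' : z 1 = 0 := le_antisymm c2 hz1
      ext i
      fin_cases i <;> simp [hz0', hz1']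
    · rintro rfl
      refine ⟨⟨by norm_num [Quad], ?_⟩, by norm_num [Quad], ?_⟩ <;>
        intro w _ <;> simp [f1, f2]
  refine ⟨keyy, ?_, hSol, ?_⟩
  · have hev : ∀ᶠ k in atTop, x k = (!₂[1, 1] : E2) :=
      eventually_atTop.2 ⟨1, fun k hk => key k hk⟩
    exact Tendsto.congr' (hev.mono fun k h => h.symm) tendsto_const_nhds
  · intro hmem
    rw [hSol] at hmem
    have := congrArg (fun p : E2 => p 0) (Set.mem_singleton_iff.mp hmem)
    rw [hv] at this
    norm_num at this
end

section
/- Let C = {(x₁, x₂) ∈ ℝ² : x₁ ≥ 0, x₂ ≥ 0}, f₁(x, y) = x₂y₁ − x₁y₂, f₂(x, y) = x₁y₂ − x₂y₁, α₁ = α₂ = 1/2. Let {θ_k} ⊂ [0, 1], {λ_k}, {μ_k} ⊂ (0, 1) with λ_k + μ_k = 1, and {ρ_k} ⊂ (0, 1). Let sequences {x^k}, {y^k}, {z^k} satisfy: x^0 = x^1 = (1, 1); y^k = x^k + θ_k (x^k − x^{k−1}); z^k ∈ C with (1/2) f₁(z^k, y) + (1/2) f₂(z^k, y) + (1/ρ_k)⟨y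 − z^k, z^k − y^k⟩ ≥ 0 for all y ∈ C; and x^{k+1} = λ_k x^k + μ_k z^k (the inertial scheme of Statement 2.5). Then x^k = y^k = z^k = (1, 1) for every k ≥ 1, so {x^k} converges to (1, 1), which does not belong to Ω = Sol(C, f₁) ∩ Sol(C, f₂) = {(0, 0)}. -/
open Filter Topology RealInnerProductSpace

lemma one_one_mem_Quad : (!₂[1, 1] : E2) ∈ Quad := by
  constructor <;> norm_num [Quad]

/-- the inertial scheme of Statement 2.5 started at
`x⁰ = x¹ = (1,1)` applied to the combination `(1/2)f₁ + (1/2)f₂` stays at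
`(1,1)` forever, hence converges to
`(1,1) ∉ Ω = Sol(C,f₁) ∩ Sol(C,f₂) = {(0,0)}`. -/
theorem statement_2_5_counterexample
    (theta lam mu ρ : ℕ → ℝ)
    (htheta : ∀ k, theta k ∈ Set.Icc (0 : ℝ) 1)
    (hlam : ∀ k, lam k ∈ Set.Ioo (0 : ℝ) 1)
    (hmu : ∀ k, mu k ∈ Set.Ioo (0 : ℝ) 1)
    (hsum : ∀ k, lam k + mu k = 1)
    (hρ : ∀ k, ρ k ∈ Set.Ioo (0 : ℝ) 1)
    (x y z : ℕ → E2)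
    (hx0 : x 0 = !₂[1, 1]) (hx1 : x 1 = !₂[1, 1])
    (hy : ∀ k ≥ 1, y k = x k + theta k • (x k - x (k - 1)))
    (hz : ∀ k ≥ 1, z k ∈ Quad ∧ ∀ w ∈ Quad,
      0 ≤ (1 / 2) * f1 (z k) w + (1 / 2) * f2 (z k) w +
        (1 / ρ k) * ⟪w - z k, z k - y k⟫)
    (hxk : ∀ k ≥ 1, x (k + 1) = lam k • x k + mu k • z k) :
    (∀ k ≥ 1, x k = (!₂[1, 1] : E2) ∧ y k = (!₂[1, 1] : E2) ∧ z k = (!₂[1, 1] : E2)) ∧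
    Filter.Tendsto x Filter.atTop (𝓝 (!₂[1, 1] : E2)) ∧
    Sol Quad f1 ∩ Sol Quad f2 = {(!₂[0, 0] : E2)} ∧
    (!₂[1, 1] : E2) ∉ Sol Quad f1 ∩ Sol Quad f2 := by
  set v : E2 := !₂[1, 1] with hv
  -- z k = v whenever y k = v
  have hzeq : ∀ k ≥ 1, y k = v → z k = v := by
    intro k hk hyk
    obtain ⟨hzC, hzin⟩ := hz k hk
    have h := hzin v one_one_mem_Quad
    rw [hyk] at h
    have hρpos : 0 < 1 / ρ k := by
      have := (hρ k).1; positivity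
    have hsum0 : (1 / 2) * f1 (z k) v + (1 / 2) * f2 (z k) v = 0 := by
      simp [f1, f2]; ring
    rw [show z k - v = -(v - z k) by abel] at h
    rw [inner_neg_right] at h
    have hle : (⟪v - z k, v - z k⟫ : ℝ) ≤ 0 := by nlinarith
    have : v - z k = 0 := by
      have := real_inner_self_nonpos.mp hle
      exact this
    symm; exact sub_eq_zero.mp this
  -- x k = v for all k
  have hxall : ∀ k, x k = v := by
    intro k
    induction k using Nat.strong_induction_on with
    | _ k ih =>
      match k with
      | 0 => exact hx0
      | 1 => exact hx1
      | (n + 2) =>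
        have hk1 : (1 : ℕ) ≤ n + 1 := le_add_self
        have hxn1 : x (n + 1) = v := ih (n + 1) (by omega)
        have hxn : x n = v := ih n (by omega)
        have hyn1 : y (n + 1) = v := by
          rw [hy (n + 1) hk1]
          simp [hxn1, hxn]
        have hzn1 : z (n + 1) = v := hzeq (n + 1) hk1 hyn1
        rw [hxk (n + 1) hk1, hxn1, hzn1, ← add_smul, hsum, one_smul]
  have hykall : ∀ k ≥ 1, y k = v := by
    intro k hk
    rw [hy k hk, hxall, hxall]
    simp
  have hmain : ∀ k ≥ 1, x k = v ∧ y k = v ∧ z k = v := fun k hk =>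
    ⟨hxall k, hykall k hk, hzeq k hk (hykall k hk)⟩
  have hsol : Sol Quad f1 ∩ Sol Quad f2 = {(!₂[0, 0] : E2)} := by
    ext p
    simp only [Set.mem_inter_iff, Set.mem_singleton_iff]
    constructor
    · rintro ⟨⟨⟨hp0, hp1⟩, h1⟩, ⟨_, h2⟩⟩
      have e1 := h1 !₂[0, 1] (by constructor <;> norm_num [Quad])
      have e2 := h2 !₂[1, 0] (by constructor <;> norm_num [Quad])
      simp [f1, f2] at e1 e2
      have hp0' : p 0 = 0 := le_antisymm e1 hp0
      have hp1' : p 1 = 0 := le_antisymm e2 hp1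
      ext i
      fin_cases i <;> simp [hp0', hp1']
    · rintro rfl
      refine ⟨⟨by constructor <;> norm_num [Quad], ?_⟩,
          ⟨by constructor <;> norm_num [Quad], ?_⟩⟩ <;>
        intro w hw <;> simp [f1, f2]
  refine ⟨hmain, ?_, hsol, ?_⟩
  · have : x = fun _ => v := funext hxall
    rw [this]; exact tendsto_const_nhds
  · rw [hsol]
    intro hmem
    have := congrArg (fun q : E2 => q 0) (Set.mem_singleton_iff.mp hmem)
    rw [hv] at this
    norm_num at this
end
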